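/- The complete bipartite graph K_{a,b} contains exactly ⌊ab/(a+b-1)⌋ pairwise edge-disjoint spanning trees, for positive integers a, b. -/

import Mathlib

open SimpleGraph

namespace EDSTAux

variable {V : Type*} [Fintype V]

lemma card_le_card_edgeFinset_add_one (G : SimpleGraph V) [Fintype G.edgeSet]
    (h : G.Connected) : Fintype.card V ≤ G.edgeFinset.card + 1 := by
  classical
  obtain ⟨root⟩ := h.nonempty
  have key : ∀ v : V, v ≠ root → ∃ u : V, G.Adj v u ∧ G.dist u root < G.dist v root := by
    intro v hv
    have hd : G.dist v root ≠ 0 := by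
      simpa [SimpleGraph.dist_ne_zero_iff_ne_and_reachable] using ⟨hv, h v root⟩
    obtain ⟨p, hp⟩ := SimpleGraph.exists_walk_of_dist_ne_zero hd
    cases p with
    | nil => simp at hp; exact absurd rfl hv
    | cons hadj q =>
      rename_i u
      refine ⟨u, hadj, ?_⟩
      have h1 : G.dist u root ≤ q.length := SimpleGraph.dist_le q
      simp [SimpleGraph.Walk.length_cons] at hp
      omega
  choose nxt hadj hdist using key
  have hinj : Set.InjOn (fun p : {v : V // v ≠ root} => s(p.1, nxt p.1 p.2)) Set.univ := by
    rintro ⟨v, hv⟩ - ⟨w, hw⟩ - hvw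
    simp only [Sym2.eq_iff] at hvw
    rcases hvw with ⟨h1, h2⟩ | ⟨h1, h2⟩
    · simpa using h1
    · exfalso
      have d1 := hdist v hv
      have d2 := hdist w hw
      rw [h2] at d1
      rw [← h1] at d2
      omega
  have hmaps : ∀ p : {v : V // v ≠ root}, s(p.1, nxt p.1 p.2) ∈ G.edgeFinset := by
    rintro ⟨v, hv⟩
    simp [SimpleGraph.mem_edgeFinset, hadj v hv]
  have hcard : Fintype.card {v : V // v ≠ root} ≤ G.edgeFinset.card := by
    have := Fintype.card_le_of_injective
      (fun p : {v : V // v ≠ root} => (⟨s(p.1, nxt p.1 p.2), hmaps p⟩ : {e // e ∈ G.edgeFinset}))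
      (by rintro x y hxy
          exact hinj (Set.mem_univ x) (Set.mem_univ y) (by simpa using congrArg Subtype.val hxy))
    rwa [Fintype.card_coe] at this
  have : Fintype.card {v : V // v ≠ root} = Fintype.card V - 1 := by
    simp [Fintype.card_subtype_compl, Fintype.card_subtype_eq root]
  have hpos : 1 ≤ Fintype.card V := Fintype.card_pos_iff.mpr ⟨root⟩
  omega

lemma isTree_of_connected_of_card (G : SimpleGraph V) [Fintype G.edgeSet]
    (h : G.Connected) (hc : G.edgeFinset.card + 1 = Fintype.card V) : G.IsTree := by
  classical
  refine ⟨h, ?_⟩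
  rw [SimpleGraph.isAcyclic_iff_forall_adj_isBridge]
  intro v w hvw
  by_contra hnb
  rw [SimpleGraph.isBridge_iff] at hnb
  push_neg at hnb
  have hreach : (G \ SimpleGraph.fromEdgeSet {s(v, w)}).Reachable v w := hnb
  set G' := G \ SimpleGraph.fromEdgeSet {s(v, w)} with hG'
  have hle : G' ≤ G := sdiff_le
  have hGadj : ∀ x y : V, G.Adj x y → G'.Reachable x y := by
    intro x y hxy
    by_cases he : s(x, y) = s(v, w)
    · rw [Sym2.eq_iff] at he
      rcases he with ⟨rfl, rfl⟩ | ⟨rfl, rfl⟩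
      · exact hreach
      · exact hreach.symm
    · exact SimpleGraph.Adj.reachable (by
        simp only [hG', SimpleGraph.sdiff_adj, SimpleGraph.fromEdgeSet_adj]
        exact ⟨hxy, fun hc => he hc.1⟩)
  have hG'conn : G'.Connected := by
    haveI : Nonempty V := h.nonempty
    refine SimpleGraph.Connected.mk (fun x y => ?_)
    obtain ⟨p⟩ := h x y
    induction p with
    | nil => exact SimpleGraph.Reachable.refl _
    | cons hadj q ih => exact (hGadj _ _ hadj).trans ih
  haveI : Fintype G'.edgeSet := by
    apply Set.Finite.fintype
    exact Set.Finite.subset (G.edgeSet.toFinite) (SimpleGraph.edgeSet_mono hle)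
  have hE' : G'.edgeFinset = G.edgeFinset.erase s(v, w) := by
    ext e
    simp only [SimpleGraph.mem_edgeFinset, Finset.mem_erase, hG']
    rw [SimpleGraph.edgeSet_sdiff, SimpleGraph.edgeSet_fromEdgeSet]
    constructor
    · rintro ⟨he, hne⟩
      refine ⟨fun hc => hne ⟨by simp [hc], ?_⟩, he⟩
      rintro hd
      subst hc
      exact hvw.ne (Sym2.mk_isDiag_iff.mp hd)
    · rintro ⟨hne, he⟩
      exact ⟨he, by simp [hne]⟩
  have hcard' := card_le_card_edgeFinset_add_one G' hG'conn
  rw [hE'] at hcard'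
  have hmem : s(v, w) ∈ G.edgeFinset := by simpa using hvw
  rw [Finset.card_erase_of_mem hmem] at hcard'
  have hpos : 1 ≤ G.edgeFinset.card := Finset.card_pos.mpr ⟨_, hmem⟩
  omega

/-! ### The staircase construction -/

def sf (a b m : ℕ) : ℕ := m * (a + b - 1) / a

variable {a b : ℕ}

lemma sf_mono (ha : 1 ≤ a) : Monotone (sf a b) := fun _ _ h =>
  Nat.div_le_div_right (Nat.mul_le_mul_right _ h)

lemma sf_succ (ha : 1 ≤ a) (hb : 1 ≤ b) (m : ℕ) : sf a b m + 1 ≤ sf a b (m + 1) := by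
  have h1 : m * (a + b - 1) + a ≤ (m + 1) * (a + b - 1) := by
    rw [add_one_mul]
    have : a ≤ a + b - 1 := by omega
    omega
  calc sf a b m + 1 = (m * (a + b - 1) + a) / a := by
        rw [Nat.add_div_right _ ha]; rfl
    _ ≤ (m + 1) * (a + b - 1) / a := Nat.div_le_div_right h1
    _ = sf a b (m + 1) := rfl

lemma le_sf (ha : 1 ≤ a) (hb : 1 ≤ b) (m : ℕ) : m ≤ sf a b m := by
  rw [sf, Nat.le_div_iff_mul_le ha]
  have : a ≤ a + b - 1 := by omega
  exact Nat.mul_le_mul_left m this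

lemma sf_add_a (ha : 1 ≤ a) (m : ℕ) : sf a b (m + a) = sf a b m + (a + b - 1) := by
  rw [sf, sf, add_mul, Nat.add_mul_div_left _ _ ha]

lemma sf_k_add (ha : 1 ≤ a) (hb : 1 ≤ b) (r : ℕ) :
    sf a b (a * b / (a + b - 1) + r) ≤ sf a b r + b := by
  have hk : (a * b / (a + b - 1)) * (a + b - 1) ≤ a * b := Nat.div_mul_le_self _ _
  calc sf a b (a * b / (a + b - 1) + r)
      = ((a * b / (a + b - 1)) * (a + b - 1) + r * (a + b - 1)) / a := by
        rw [sf, add_mul]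
    _ ≤ (r * (a + b - 1) + b * a) / a := by
        apply Nat.div_le_div_right; rw [mul_comm b a]; omega
    _ = sf a b r + b := by rw [Nat.add_mul_div_right _ _ ha]; rfl

lemma mod_inj {b r x y : ℕ} (hxr : r ≤ x) (hxy : x ≤ y) (hlt : y - x < b)
    (hm : (x - r) % b = (y - r) % b) : x = y := by
  have h1 : (y - r) - (x - r) = y - x := by omega
  have h2 : b ∣ (y - r) - (x - r) := (Nat.modEq_iff_dvd' (by omega)).mp hm
  rw [h1] at h2
  have := Nat.eq_zero_of_dvd_of_lt h2
  omega

lemma interval_sep (ha : 1 ≤ a) (hb : 1 ≤ b) {i j r x y : ℕ}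
    (hij : i ≤ j) (hj : j < a * b / (a + b - 1))
    (hx1 : sf a b (i + r) ≤ x) (hx2 : x < sf a b (i + r + 1))
    (hy1 : sf a b (j + r) ≤ y) (hy2 : y < sf a b (j + r + 1)) :
    y - x < b ∧ (i < j → x < y) := by
  constructor
  · have h1 : y < sf a b r + b :=
      lt_of_lt_of_le hy2 (le_trans (sf_mono ha (show j + r + 1 ≤ a * b / (a + b - 1) + r by omega))
        (sf_k_add ha hb r))
    have h2 : sf a b r ≤ x := le_trans (sf_mono ha (Nat.le_add_left r i)) hx1
    omega
  · intro hlt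
    have : sf a b (i + r + 1) ≤ sf a b (j + r) := sf_mono ha (by omega)
    omega

def stairP (a b i : ℕ) (r : Fin a) (c : Fin b) : Prop :=
  ∃ x : ℕ, sf a b (i + r.val) ≤ x ∧ x < sf a b (i + r.val + 1) ∧ (c : ℕ) = (x - r.val) % b

def stair (a b i : ℕ) : (completeBipartiteGraph (Fin a) (Fin b)).Subgraph where
  verts := Set.univ
  Adj u v := (∃ r c, u = Sum.inl r ∧ v = Sum.inr c ∧ stairP a b i r c) ∨
             (∃ r c, u = Sum.inr c ∧ v = Sum.inl r ∧ stairP a b i r c)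
  adj_sub := by
    rintro u v (⟨r, c, rfl, rfl, -⟩ | ⟨r, c, rfl, rfl, -⟩) <;> simp [completeBipartiteGraph]
  edge_vert := by intro u v _; trivial
  symm := by
    constructor; rintro u v (⟨r, c, rfl, rfl, h⟩ | ⟨r, c, rfl, rfl, h⟩)
    exacts [Or.inr ⟨r, c, rfl, rfl, h⟩, Or.inl ⟨r, c, rfl, rfl, h⟩]

lemma stair_adj_iff {i : ℕ} {r : Fin a} {c : Fin b} :
    (stair a b i).Adj (Sum.inl r) (Sum.inr c) ↔ stairP a b i r c := by
  constructor
  · rintro (⟨r', c', h1, h2, h⟩ | ⟨r', c', h1, h2, h⟩)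
    · rw [Sum.inl.injEq] at h1; rw [Sum.inr.injEq] at h2; rwa [h1, h2]
    · exact absurd h1 (by simp)
  · intro h; exact Or.inl ⟨r, c, rfl, rfl, h⟩

lemma stair_adj_cases {i : ℕ} {u v : Fin a ⊕ Fin b} (h : (stair a b i).Adj u v) :
    (∃ r c, u = Sum.inl r ∧ v = Sum.inr c ∧ stairP a b i r c) ∨
    (∃ r c, u = Sum.inr c ∧ v = Sum.inl r ∧ stairP a b i r c) := h

lemma stair_spanning (a b i : ℕ) : (stair a b i).IsSpanning := fun _ => trivial

lemma exists_shift (hb : 1 ≤ b) (fi c : ℕ) (hc : c < b) : ∃ d, d < b ∧ (fi + d) % b = c := by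
  have hm : fi % b < b := Nat.mod_lt _ hb
  by_cases hcase : fi % b ≤ c
  · refine ⟨c - fi % b, by omega, ?_⟩
    rw [Nat.add_mod, Nat.mod_eq_of_lt (show c - fi % b < b by omega),
      Nat.mod_eq_of_lt (show fi % b + (c - fi % b) < b by omega)]
    omega
  · refine ⟨c + b - fi % b, by omega, ?_⟩
    rw [Nat.add_mod, Nat.mod_eq_of_lt (show c + b - fi % b < b by omega)]
    have h2 : fi % b + (c + b - fi % b) = c + b := by omega
    rw [h2, Nat.add_mod_right]
    exact Nat.mod_eq_of_lt hc

lemma stair_col_covered (ha : 1 ≤ a) (hb : 1 ≤ b) (i : ℕ) (c : Fin b) :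
    ∃ r : Fin a, stairP a b i r c := by
  obtain ⟨d, hdb, hd⟩ := exists_shift hb (sf a b i) c c.isLt
  set m := sf a b i + d with hm
  set P : ℕ → Prop := fun r => sf a b (i + r) ≤ m + r with hP
  have hP0 : P 0 := by simp [hP, hm]
  set r := Nat.findGreatest P (a - 1) with hrdef
  have hPr : P r := Nat.findGreatest_spec (Nat.zero_le _) hP0
  have hra : r ≤ a - 1 := Nat.findGreatest_le _
  have hupper : m + r < sf a b (i + r + 1) := by
    by_cases hcase : r = a - 1
    · have h1 : sf a b (i + r + 1) = sf a b i + (a + b - 1) := by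
        rw [show i + r + 1 = i + a by omega, sf_add_a ha]
      omega
    · have hng := Nat.findGreatest_is_greatest (show r < r + 1 by omega)
        (show r + 1 ≤ a - 1 by omega)
      simp only [hP, not_le] at hng
      rw [show i + (r + 1) = i + r + 1 from rfl] at hng
      omega
  refine ⟨⟨r, by omega⟩, m + r, hPr, hupper, ?_⟩
  show (c : ℕ) = (m + r - r) % b
  rw [Nat.add_sub_cancel, hd]

lemma stair_connected (ha : 1 ≤ a) (hb : 1 ≤ b) (i : ℕ) : (stair a b i).coe.Connected := by
  set G' := (stair a b i).coe with hG'
  have hmem : ∀ u : Fin a ⊕ Fin b, u ∈ (stair a b i).verts := stair_spanning a b i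
  have hadj : ∀ (r : Fin a) (c : Fin b), stairP a b i r c →
      G'.Adj ⟨Sum.inl r, hmem _⟩ ⟨Sum.inr c, hmem _⟩ := by
    intro r c h
    exact stair_adj_iff.mpr h
  have hstep : ∀ n : ℕ, ∀ _hn : n + 1 < a, ∃ c : Fin b,
      stairP a b i ⟨n, by omega⟩ c ∧ stairP a b i ⟨n + 1, by omega⟩ c := by
    intro n hn
    have h1 := sf_succ (a := a) (b := b) ha hb (i + n)
    have h2 := sf_succ (a := a) (b := b) ha hb (i + n + 1)
    have hge := le_sf (a := a) (b := b) ha hb (i + n + 1)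
    refine ⟨⟨(sf a b (i + n + 1) - 1 - n) % b, Nat.mod_lt _ hb⟩,
      ⟨sf a b (i + n + 1) - 1, by simp only [Fin.val_mk, ← Nat.add_assoc]; omega,
        by simp only [Fin.val_mk, ← Nat.add_assoc]; omega, rfl⟩,
      ⟨sf a b (i + n + 1), by simp only [Fin.val_mk, ← Nat.add_assoc]; omega,
        by simp only [Fin.val_mk, ← Nat.add_assoc]; omega, ?_⟩⟩
    show (sf a b (i + n + 1) - 1 - n) % b = (sf a b (i + n + 1) - (n + 1)) % b
    congr 1
    omega
  have h0 : (0 : ℕ) < a := ha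
  have hrowreach : ∀ n : ℕ, ∀ hn : n < a,
      G'.Reachable ⟨Sum.inl ⟨0, h0⟩, hmem _⟩ ⟨Sum.inl ⟨n, hn⟩, hmem _⟩ := by
    intro n
    induction n with
    | zero => intro hn; rfl
    | succ m ih =>
      intro hn
      obtain ⟨c, hc1, hc2⟩ := hstep m hn
      exact (ih (by omega)).trans
        ((hadj ⟨m, by omega⟩ c hc1).reachable.trans (hadj ⟨m + 1, hn⟩ c hc2).reachable.symm)
  have hvert : ∀ u : Fin a ⊕ Fin b, G'.Reachable ⟨Sum.inl ⟨0, h0⟩, hmem _⟩ ⟨u, hmem _⟩ := by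
    intro u
    match u with
    | Sum.inl r =>
      obtain ⟨n, hn⟩ := r
      exact hrowreach n hn
    | Sum.inr c =>
      obtain ⟨r, hr⟩ := stair_col_covered ha hb i c
      obtain ⟨n, hn⟩ := r
      exact (hrowreach n hn).trans (hadj ⟨n, hn⟩ c hr).reachable
  haveI : Nonempty ↥(stair a b i).verts := ⟨⟨Sum.inl ⟨0, h0⟩, hmem _⟩⟩
  refine Connected.mk fun u v => ?_
  obtain ⟨u, hu⟩ := u
  obtain ⟨v, hv⟩ := v
  exact (hvert u).symm.trans (hvert v)



lemma sum_width (i : ℕ) (ha : 1 ≤ a) : ∀ n : ℕ,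
    ∑ r ∈ Finset.range n, (sf a b (i + r + 1) - sf a b (i + r)) = sf a b (i + n) - sf a b i := by
  intro n
  induction n with
  | zero => simp
  | succ m ih =>
    rw [Finset.sum_range_succ, ih]
    have h1 : sf a b i ≤ sf a b (i + m) := sf_mono ha (by omega)
    have h2 : sf a b (i + m) ≤ sf a b (i + m + 1) := sf_mono ha (by omega)
    simp only [← Nat.add_assoc]
    omega

/-- The edge finset of the staircase tree. -/
noncomputable def stairE (a b i : ℕ) (hb : 1 ≤ b) : Finset (Sym2 (Fin a ⊕ Fin b)) :=
  Finset.univ.biUnion (fun r : Fin a =>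
    (Finset.Ico (sf a b (i + r.val)) (sf a b (i + r.val + 1))).image
      (fun x => s(Sum.inl r, Sum.inr (⟨(x - r.val) % b, Nat.mod_lt _ hb⟩ : Fin b))))

lemma stair_edgeFinset_eq (ha : 1 ≤ a) (hb : 1 ≤ b) (i : ℕ)
    [Fintype ((stair a b i).spanningCoe.edgeSet)] :
    (stair a b i).spanningCoe.edgeFinset = stairE a b i hb := by
  ext e
  induction e using Sym2.ind with
  | _ u v =>
    simp only [mem_edgeFinset, mem_edgeSet, Subgraph.spanningCoe_adj]
    constructor
    · intro h
      rcases stair_adj_cases h with ⟨r, c, rfl, rfl, x, hx1, hx2, hc⟩ |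
        ⟨r, c, rfl, rfl, x, hx1, hx2, hc⟩
      · rw [stairE, Finset.mem_biUnion]
        refine ⟨r, Finset.mem_univ _, Finset.mem_image.mpr ⟨x, Finset.mem_Ico.mpr ⟨hx1, hx2⟩, ?_⟩⟩
        have hcc : c = (⟨(x - r.val) % b, Nat.mod_lt _ hb⟩ : Fin b) := Fin.ext hc
        rw [hcc]
      · rw [stairE, Finset.mem_biUnion]
        refine ⟨r, Finset.mem_univ _, Finset.mem_image.mpr ⟨x, Finset.mem_Ico.mpr ⟨hx1, hx2⟩, ?_⟩⟩
        have hcc : c = (⟨(x - r.val) % b, Nat.mod_lt _ hb⟩ : Fin b) := Fin.ext hc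
        rw [hcc, Sym2.eq_swap]
    · intro h
      rw [stairE, Finset.mem_biUnion] at h
      obtain ⟨r, -, h⟩ := h
      obtain ⟨x, hx, he⟩ := Finset.mem_image.mp h
      rw [Finset.mem_Ico] at hx
      rw [Sym2.eq_iff] at he
      rcases he with ⟨h1, h2⟩ | ⟨h1, h2⟩
      · rw [← h1, ← h2]
        exact Or.inl ⟨r, _, rfl, rfl, x, hx.1, hx.2, rfl⟩
      · rw [← h1, ← h2]
        exact Or.inr ⟨r, _, rfl, rfl, x, hx.1, hx.2, rfl⟩

lemma stairE_card (ha : 1 ≤ a) (hb : 1 ≤ b) {i : ℕ} (hi : i < a * b / (a + b - 1)) :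
    (stairE a b i hb).card = a + b - 1 := by
  rw [stairE, Finset.card_biUnion]
  · have hcard : ∀ r : Fin a,
        ((Finset.Ico (sf a b (i + r.val)) (sf a b (i + r.val + 1))).image
          (fun x => s(Sum.inl r, Sum.inr (⟨(x - r.val) % b, Nat.mod_lt _ hb⟩ : Fin b)))).card
        = sf a b (i + r.val + 1) - sf a b (i + r.val) := by
      intro r
      rw [Finset.card_image_of_injOn, Nat.card_Ico]
      intro x hx y hy hxy
      rw [Finset.mem_coe, Finset.mem_Ico] at hx hy
      have hsep1 := interval_sep ha hb (le_refl i) hi hx.1 hx.2 hy.1 hy.2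
      have hsep2 := interval_sep ha hb (le_refl i) hi hy.1 hy.2 hx.1 hx.2
      have hxr : (r : ℕ) ≤ x := le_trans (by
        have := le_sf (a := a) (b := b) ha hb (i + r.val); omega) hx.1
      have hyr : (r : ℕ) ≤ y := le_trans (by
        have := le_sf (a := a) (b := b) ha hb (i + r.val); omega) hy.1
      have hmod : (x - r.val) % b = (y - r.val) % b := by
        have := congrArg (fun e => e) hxy
        simp only [Sym2.eq_iff, Sum.inl.injEq, Sum.inr.injEq] at hxy
        rcases hxy with ⟨-, h2⟩ | ⟨h1, -⟩
        · exact congrArg Fin.val h2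
        · exact absurd h1 (by simp)
      rcases Nat.le_total x y with hle | hle
      · exact mod_inj hxr hle hsep1.1 hmod
      · exact (mod_inj hyr hle hsep2.1 hmod.symm).symm
    rw [Finset.sum_congr rfl (fun r _ => hcard r)]
    rw [Fin.sum_univ_eq_sum_range (fun r => sf a b (i + r + 1) - sf a b (i + r)) a]
    rw [sum_width i ha a, sf_add_a ha]
    omega
  · intro r _ r' _ hrr'
    rw [Function.onFun, Finset.disjoint_left]
    intro e he he'
    obtain ⟨x, -, hex⟩ := Finset.mem_image.mp he
    obtain ⟨y, -, hey⟩ := Finset.mem_image.mp he'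
    rw [← hey] at hex
    simp only [Sym2.eq_iff, Sum.inl.injEq, Sum.inr.injEq] at hex
    rcases hex with ⟨h1, -⟩ | ⟨h1, -⟩
    · exact hrr' h1
    · exact absurd h1 (by simp)

lemma stair_isTree (ha : 1 ≤ a) (hb : 1 ≤ b) {i : ℕ} (hi : i < a * b / (a + b - 1)) :
    (stair a b i).coe.IsTree := by
  classical
  haveI : Fintype ((stair a b i).coe.edgeSet) := Fintype.ofFinite _
  haveI : Fintype ((stair a b i).spanningCoe.edgeSet) := Fintype.ofFinite _
  apply isTree_of_connected_of_card _ (stair_connected ha hb i)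
  have hVcard : Fintype.card ↥(stair a b i).verts = a + b := by
    rw [Fintype.card_congr (Equiv.subtypeUnivEquiv (stair_spanning a b i))]
    simp
  rw [hVcard]
  have hiso := (Subgraph.spanningCoeEquivCoeOfSpanning (stair a b i) (stair_spanning a b i))
  have hcards : (stair a b i).coe.edgeFinset.card = (stair a b i).spanningCoe.edgeFinset.card := by
    rw [edgeFinset_card, edgeFinset_card]
    exact (Fintype.card_congr hiso.mapEdgeSet).symm
  rw [hcards, stair_edgeFinset_eq ha hb i, stairE_card ha hb hi]
  omega

lemma stair_edge_disjoint (ha : 1 ≤ a) (hb : 1 ≤ b) {i j : ℕ}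
    (hi : i < a * b / (a + b - 1)) (hj : j < a * b / (a + b - 1)) (hij : i ≠ j) :
    (stair a b i).edgeSet ∩ (stair a b j).edgeSet = ∅ := by
  have key : ∀ i j : ℕ, i < j → j < a * b / (a + b - 1) →
      ∀ (r : Fin a) (c : Fin b), stairP a b i r c → stairP a b j r c → False := by
    intro i j hlt hjk r c ⟨x, hx1, hx2, hcx⟩ ⟨y, hy1, hy2, hcy⟩
    have hsep := interval_sep ha hb (le_of_lt hlt) hjk hx1 hx2 hy1 hy2
    have hxr : (r : ℕ) ≤ x := le_trans (by
      have := le_sf (a := a) (b := b) ha hb (i + r.val); omega) hx1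
    have := mod_inj hxr (le_of_lt (hsep.2 hlt)) hsep.1 (hcx ▸ hcy ▸ rfl)
    omega
  ext e
  simp only [Set.mem_inter_iff, Set.mem_empty_iff_false, iff_false]
  induction e using Sym2.ind with
  | _ u v =>
    rintro ⟨h1, h2⟩
    rw [Subgraph.mem_edgeSet] at h1 h2
    have get : ∀ k : ℕ, (stair a b k).Adj u v →
        ∃ (r : Fin a) (c : Fin b), ((u = Sum.inl r ∧ v = Sum.inr c) ∨
          (u = Sum.inr c ∧ v = Sum.inl r)) ∧ stairP a b k r c := by
      intro k h
      rcases stair_adj_cases h with ⟨r, c, h3, h4, h5⟩ | ⟨r, c, h3, h4, h5⟩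
      exacts [⟨r, c, Or.inl ⟨h3, h4⟩, h5⟩, ⟨r, c, Or.inr ⟨h3, h4⟩, h5⟩]
    obtain ⟨r, c, hrc, hP1⟩ := get i h1
    obtain ⟨r', c', hrc', hP2⟩ := get j h2
    have fin : ∀ (r : Fin a) (c : Fin b), stairP a b i r c → stairP a b j r c → False := by
      intro r c hQ1 hQ2
      rcases Nat.lt_or_ge i j with hlt | hge
      · exact key i j hlt hj r c hQ1 hQ2
      · exact key j i (by omega) hi r c hQ2 hQ1
    rcases hrc with ⟨e1, e2⟩ | ⟨e1, e2⟩ <;> rcases hrc' with ⟨e3, e4⟩ | ⟨e3, e4⟩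
    · obtain rfl : r = r' := Sum.inl.inj (e1.symm.trans e3)
      obtain rfl : c = c' := Sum.inr.inj (e2.symm.trans e4)
      exact fin r c hP1 hP2
    · rw [e1] at e3; simp at e3
    · rw [e1] at e3; simp at e3
    · obtain rfl : c = c' := Sum.inr.inj (e1.symm.trans e3)
      obtain rfl : r = r' := Sum.inl.inj (e2.symm.trans e4)
      exact fin r c hP1 hP2


end EDSTAux


/-- A family of `n` pairwise edge-disjoint spanning trees of `G`. -/
def EdgeDisjointSpanningTrees {V : Type*} (G : SimpleGraph V) (n : ℕ) : Prop :=
  ∃ T : Fin n → G.Subgraph,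
    (∀ i, (T i).IsSpanning ∧ (T i).coe.IsTree) ∧
    ∀ i j, i ≠ j → (T i).edgeSet ∩ (T j).edgeSet = ∅

namespace EDSTAux

variable {a b : ℕ}

lemma cbg_card (a b : ℕ) [Fintype ((completeBipartiteGraph (Fin a) (Fin b)).edgeSet)] :
    (completeBipartiteGraph (Fin a) (Fin b)).edgeFinset.card = a * b := by
  classical
  have heq : (completeBipartiteGraph (Fin a) (Fin b)).edgeFinset =
      (Finset.univ : Finset (Fin a × Fin b)).image (fun p => s(Sum.inl p.1, Sum.inr p.2)) := by
    ext e
    induction e using Sym2.ind with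
    | _ u v =>
      simp only [mem_edgeFinset, Finset.mem_image, Finset.mem_univ]
      constructor
      · intro h
        match u, v with
        | Sum.inl r, Sum.inr c => exact ⟨(r, c), trivial, rfl⟩
        | Sum.inr c, Sum.inl r => exact ⟨(r, c), trivial, Sym2.eq_swap⟩
        | Sum.inl r, Sum.inl r' => simp [completeBipartiteGraph] at h
        | Sum.inr c, Sum.inr c' => simp [completeBipartiteGraph] at h
      · rintro ⟨⟨r, c⟩, -, he⟩
        rw [← he, SimpleGraph.mem_edgeSet]
        simp [completeBipartiteGraph]
  rw [heq, Finset.card_image_of_injective _ ?_, Finset.card_univ, Fintype.card_prod,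
    Fintype.card_fin, Fintype.card_fin]
  intro p q h
  simp only [Sym2.eq_iff, Sum.inl.injEq, Sum.inr.injEq] at h
  rcases h with ⟨h1, h2⟩ | ⟨h1, h2⟩
  · exact Prod.ext h1 h2
  · exact absurd h1 (by simp)

lemma edst_upper (ha : 1 ≤ a) (hb : 1 ≤ b) (n : ℕ)
    (h : EdgeDisjointSpanningTrees (completeBipartiteGraph (Fin a) (Fin b)) n) :
    n ≤ a * b / (a + b - 1) := by
  classical
  obtain ⟨T, hT, hdisj⟩ := h
  haveI instE : ∀ i : Fin n, Fintype ↥((T i).edgeSet) := fun i => Fintype.ofFinite _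
  have hcard : ∀ i : Fin n, ((T i).edgeSet.toFinset.card) = a + b - 1 := by
    intro i
    obtain ⟨hspan, htree⟩ := hT i
    haveI : Fintype ↥(T i).verts := Fintype.ofFinite _
    haveI : Fintype ((T i).coe.edgeSet) := Fintype.ofFinite _
    haveI : Fintype ((T i).spanningCoe.edgeSet) := Fintype.ofFinite _
    have h1 := htree.card_edgeFinset
    have hV : Fintype.card ↥(T i).verts = a + b := by
      rw [Fintype.card_congr (Equiv.subtypeUnivEquiv hspan)]
      simp
    have hiso := Subgraph.spanningCoeEquivCoeOfSpanning (T i) hspan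
    have h2 : (T i).spanningCoe.edgeFinset.card = (T i).coe.edgeFinset.card := by
      rw [edgeFinset_card, edgeFinset_card]
      exact Fintype.card_congr hiso.mapEdgeSet
    have h3 : (T i).spanningCoe.edgeSet = (T i).edgeSet := by
      ext e
      induction e using Sym2.ind with
      | _ u v => simp [mem_edgeSet, Subgraph.spanningCoe_adj, Subgraph.mem_edgeSet]
    have h4 : (T i).edgeSet.toFinset.card = (T i).spanningCoe.edgeFinset.card := by
      rw [Set.toFinset_card, edgeFinset_card]
      exact (Fintype.card_congr (Equiv.setCongr h3)).symm
    omega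
  haveI : Fintype ((completeBipartiteGraph (Fin a) (Fin b)).edgeSet) := Fintype.ofFinite _
  have hsub : Finset.univ.biUnion (fun i : Fin n => (T i).edgeSet.toFinset) ⊆
      (completeBipartiteGraph (Fin a) (Fin b)).edgeFinset := by
    intro e he
    obtain ⟨i, -, he⟩ := Finset.mem_biUnion.mp he
    rw [Set.mem_toFinset] at he
    exact mem_edgeFinset.mpr ((T i).edgeSet_subset he)
  have hbu : (Finset.univ.biUnion fun i : Fin n => (T i).edgeSet.toFinset).card
      = n * (a + b - 1) := by
    rw [Finset.card_biUnion]
    · rw [Finset.sum_congr rfl (fun i _ => hcard i)]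
      simp [Finset.card_univ, mul_comm]
    · intro i _ j _ hij
      rw [Function.onFun, Finset.disjoint_left]
      intro e he1 he2
      rw [Set.mem_toFinset] at he1 he2
      have hmem : e ∈ (T i).edgeSet ∩ (T j).edgeSet := ⟨he1, he2⟩
      rw [hdisj i j hij] at hmem
      exact hmem
  have hle := Finset.card_le_card hsub
  rw [hbu, cbg_card] at hle
  rw [Nat.le_div_iff_mul_le (show 0 < a + b - 1 by omega)]
  exact hle

lemma edst_mem (ha : 1 ≤ a) (hb : 1 ≤ b) :
    EdgeDisjointSpanningTrees (completeBipartiteGraph (Fin a) (Fin b))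
      (a * b / (a + b - 1)) := by
  refine ⟨fun i => stair a b i.val,
    fun i => ⟨stair_spanning a b i.val, stair_isTree ha hb i.isLt⟩,
    fun i j hij => stair_edge_disjoint ha hb i.isLt j.isLt (fun hc => hij (Fin.ext hc))⟩

end EDSTAux

theorem stmt_1 (a b : ℕ) (ha : 1 ≤ a) (hb : 1 ≤ b) :
    IsGreatest {n | EdgeDisjointSpanningTrees (completeBipartiteGraph (Fin a) (Fin b)) n}
      (a * b / (a + b - 1)) :=
  ⟨EDSTAux.edst_mem ha hb, fun n hn => EDSTAux.edst_upper ha hb n hn⟩
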